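/- Let 𝔥 be a Lie subalgebra of 𝔰 which is a CR subspace of 𝔰. Then there exists X ∈ 𝔰 such that exp(ad(X))(𝔥) = 𝔟 ⊕ 𝔠 ⊕ 𝔯 ⊕ 𝔷, an orthogonal direct sum in which 𝔟 is a subspace of ℝB, 𝔠 is a complex subspace of E, 𝔯 is a totally real subspace of E orthogonal to 𝔠, and 𝔷 is a subspace of ℝZ containing [𝔠,𝔠] (that is, 𝔷 = ℝZ whenever 𝔠 ≠ 0). -/

import Mathlib

open scoped RealInnerProductSpace

noncomputable section

namespace CHn

/-- `E n` is `ℂ^{n-1}`, viewed as a real inner product space with `⟪U,V⟫ = Re⟪U,V⟫_ℂ`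
and complex structure `JU = iU`. -/
abbrev E (n : ℕ) := EuclideanSpace ℂ (Fin (n - 1))

/-- The solvable part `𝔰 = 𝔞 ⊕ 𝔫` of the Iwasawa decomposition of `𝔰𝔲(1,n)`, modeled as
`ℝB ⊕ E ⊕ ℝZ`; the element `(a, U, x)` represents `aB + U + xZ`. -/
abbrev S (n : ℕ) := ℝ × E n × ℝ

variable (n : ℕ)

/-- The vector `B`. -/
def B : S n := (1, 0, 0)

/-- The vector `Z`. -/
def Z : S n := (0, 0, 1)

/-- The inner product of `𝔰` (`B`, `Z` unit, orthogonal direct sum `ℝB ⊕ E ⊕ ℝZ`). -/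
def sInner (X Y : S n) : ℝ := X.1 * Y.1 + ⟪X.2.1, Y.2.1⟫ + X.2.2 * Y.2.2

/-- The ambient complex structure on `𝔰`: `J(aB + U + xZ) = -xB + JU + aZ`. -/
def Js : S n →ₗ[ℝ] S n where
  toFun X := (-X.2.2, Complex.I • X.2.1, X.1)
  map_add' X Y := by
    refine Prod.ext ?_ (Prod.ext ?_ ?_)
    · simp; ring
    · simp [smul_add]
    · simp
  map_smul' c X := by
    refine Prod.ext ?_ (Prod.ext ?_ ?_)
    · simp only [Prod.smul_fst, Prod.smul_snd, smul_eq_mul, RingHom.id_apply]; ring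
    · simp [Prod.smul_fst, Prod.smul_snd, smul_comm c Complex.I]
    · simp

/-- The Lie bracket of `𝔰`:
`[aB + U + xZ, bB + V + yZ] = (1/2)(aV - bU) + (ay - bx + ⟪JU, V⟫)Z`. -/
def bra (X Y : S n) : S n :=
  (0, (2⁻¹ : ℝ) • (X.1 • Y.2.1 - Y.1 • X.2.1),
    X.1 * Y.2.2 - Y.1 * X.2.2 + ⟪Complex.I • X.2.1, Y.2.1⟫)

/-- `ad(X) = [X, ·]`, a (continuous) linear endomorphism of `𝔰`. -/
def ad (X : S n) : S n →L[ℝ] S n :=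
  LinearMap.toContinuousLinearMap
    { toFun := bra n X
      map_add' := fun Y Y' => by
        unfold bra
        refine Prod.ext ?_ (Prod.ext ?_ ?_)
        · simp
        · simp only [Prod.fst_add, Prod.snd_add]
          module
        · simp only [Prod.fst_add, Prod.snd_add, inner_add_right]
          ring
      map_smul' := fun c Y => by
        unfold bra
        have h : ⟪Complex.I • X.2.1, c • Y.2.1⟫ = c * ⟪Complex.I • X.2.1, Y.2.1⟫ :=
          real_inner_smul_right _ _ _
        refine Prod.ext ?_ (Prod.ext ?_ ?_)
        · simp
        · simp only [Prod.smul_fst, Prod.smul_snd, smul_eq_mul, RingHom.id_apply]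
          module
        · simp only [Prod.smul_fst, Prod.smul_snd, smul_eq_mul, h, RingHom.id_apply]
          ring }

/-- `exp(ad(X)) = Σ_{k ≥ 0} ad(X)^k / k!`. -/
def expAd (X : S n) : S n →L[ℝ] S n := NormedSpace.exp (ad n X)

/-- `ρ(t) = (e^t - 1)/t` for `t ≠ 0`, `ρ(0) = 1`. -/
def rho (t : ℝ) : ℝ := if t = 0 then 1 else (Real.exp t - 1) / t

/-- The Iwasawa group `AN`, modeled as `G = ℝ × E × ℝ`. -/
abbrev G (n : ℕ) := ℝ × E n × ℝ

/-- The product of `G`: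
`(a,P,p)·(b,Q,q) = (a+b, P + e^{a/2}Q, p + e^a q + (1/2)e^{a/2}⟪JP,Q⟫)`. -/
def gmul (g h : G n) : G n :=
  (g.1 + h.1, g.2.1 + Real.exp (g.1 / 2) • h.2.1,
    g.2.2 + Real.exp g.1 * h.2.2 + 2⁻¹ * Real.exp (g.1 / 2) * ⟪Complex.I • g.2.1, h.2.1⟫)

/-- The Lie exponential `Exp : 𝔰 → G`, `Exp(cB + W + zZ) = (c, ρ(c/2)W, ρ(c)z)`. -/
def Exp (X : S n) : G n := (X.1, rho (X.1 / 2) • X.2.1, rho X.1 * X.2.2)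

/-- The inclusion of `E` into `𝔰`. -/
def inE : E n →ₗ[ℝ] S n where
  toFun U := (0, U, 0)
  map_add' U V := by refine Prod.ext ?_ (Prod.ext ?_ ?_) <;> simp
  map_smul' c U := by refine Prod.ext ?_ (Prod.ext ?_ ?_) <;> simp

/-- A real subspace of `E` is totally real if `⟪Ju, v⟫ = 0` for all its elements. -/
def TotallyRealE (V : Submodule ℝ (E n)) : Prop :=
  ∀ u ∈ V, ∀ v ∈ V, ⟪Complex.I • u, v⟫ = 0

/-- A real subspace of `E` is complex if it is `J`-invariant. -/
def IsComplexE (V : Submodule ℝ (E n)) : Prop :=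
  ∀ u ∈ V, Complex.I • u ∈ V

/-- The maximal complex subspace `V ∩ JV` of a real subspace `V` of `E`. -/
def maxCE (V : Submodule ℝ (E n)) : Set (E n) := {w | w ∈ V ∧ Complex.I • w ∈ V}

/-- `V` is a CR subspace of `E` if the orthogonal complement in `V` of its maximal
complex subspace `V ∩ JV` is totally real. -/
def IsCRE (V : Submodule ℝ (E n)) : Prop :=
  ∀ u ∈ V, ∀ v ∈ V, (∀ w ∈ maxCE n V, ⟪u, w⟫ = 0) →
    (∀ w ∈ maxCE n V, ⟪v, w⟫ = 0) → ⟪Complex.I • u, v⟫ = 0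

/-- A subset of `𝔰` is totally real if `⟪Ju, v⟫ = 0` for all its elements. -/
def TotallyRealS (V : Set (S n)) : Prop := ∀ u ∈ V, ∀ v ∈ V, sInner n (Js n u) v = 0

/-- The maximal complex subspace `V ∩ JV` of a real subspace `V` of `𝔰`. -/
def maxCS (V : Set (S n)) : Set (S n) := {x | x ∈ V ∧ Js n x ∈ V}

/-- `V` is a CR subspace of `𝔰` if the orthogonal complement in `V` of its maximal
complex subspace `V ∩ JV` is totally real. -/
def IsCRS (V : Set (S n)) : Prop :=
  ∀ u ∈ V, ∀ v ∈ V, (∀ w ∈ maxCS n V, sInner n u w = 0) →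
    (∀ w ∈ maxCS n V, sInner n v w = 0) → sInner n (Js n u) v = 0



/-! ### Auxiliary lemmas -/

section Aux

variable {n : ℕ}

open scoped InnerProductSpace

lemma rinner_re (u v : E n) : ⟪u, v⟫ = (⟪u, v⟫_ℂ).re := by
  simp only [PiLp.inner_apply, Complex.inner]
  rw [Complex.re_sum]; rfl

set_option linter.unusedVariables false in
lemma rinner_I_self (u : E n) : ⟪Complex.I • u, u⟫ = 0 := by
  rw [rinner_re, inner_smul_left]; simp; ring_nf; rw [← Complex.ofReal_pow, Complex.ofReal_im]

lemma rinner_I_skew (u v : E n) : ⟪Complex.I • u, v⟫ = - ⟪u, Complex.I • v⟫ := by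
  rw [rinner_re, rinner_re, inner_smul_left, inner_smul_right]; simp

lemma rinner_I_I (u v : E n) : ⟪Complex.I • u, Complex.I • v⟫ = ⟪u, v⟫ := by
  rw [rinner_re, rinner_re, inner_smul_left, inner_smul_right]
  simp [← mul_assoc]

lemma rinner_self_I (u : E n) : ⟪u, Complex.I • u⟫ = 0 := by
  rw [real_inner_comm, rinner_I_self]

lemma II_smul (u : E n) : Complex.I • Complex.I • u = -u := by
  rw [smul_smul, Complex.I_mul_I, neg_one_smul]

lemma exp_sq_zero {A : Type*} [NormedRing A] [NormedAlgebra ℝ A] [CompleteSpace A]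
    (x : A) (hx : x * x = 0) : NormedSpace.exp x = 1 + x := by
  have he : NormedSpace.exp x = ∑' k : ℕ, (k.factorial : ℝ)⁻¹ • x ^ k :=
    congrFun (NormedSpace.exp_eq_tsum ℝ) x
  have h0 : ∀ b ∉ Finset.range 2, (b.factorial : ℝ)⁻¹ • x ^ b = 0 := by
    intro b hb
    simp only [Finset.mem_range, not_lt] at hb
    have hxb : x ^ b = 0 := by
      have : x ^ b = x ^ 2 * x ^ (b - 2) := by rw [← pow_add]; congr 1; omega
      rw [this, sq, hx, zero_mul]
    simp [hxb]
  rw [he, tsum_eq_sum h0]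
  simp [Finset.sum_range_succ]

lemma ad_apply (X Y : S n) : ad n X Y = bra n X Y := rfl

lemma bra_of_fst_zero (X Y : S n) (hX : X.1 = 0) :
    bra n X Y = (0, (-((2:ℝ)⁻¹ * Y.1)) • X.2.1, ⟪Complex.I • X.2.1, Y.2.1⟫ - Y.1 * X.2.2) := by
  unfold bra
  rw [hX]
  refine Prod.ext rfl (Prod.ext ?_ ?_)
  · show (2⁻¹ : ℝ) • ((0:ℝ) • Y.2.1 - Y.1 • X.2.1) = _
    rw [zero_smul, zero_sub, smul_neg, smul_smul, ← neg_smul]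
  · show (0:ℝ) * Y.2.2 - Y.1 * X.2.2 + ⟪Complex.I • X.2.1, Y.2.1⟫ = _
    ring

lemma bra_bra_self (X Y : S n) (hX : X.1 = 0) : bra n X (bra n X Y) = 0 := by
  rw [bra_of_fst_zero _ _ hX, bra_of_fst_zero _ _ hX]
  refine Prod.ext rfl (Prod.ext ?_ ?_)
  · show (-((2:ℝ)⁻¹ * (0:ℝ))) • X.2.1 = (0 : E n)
    simp
  · show ⟪Complex.I • X.2.1, (-((2:ℝ)⁻¹ * Y.1)) • X.2.1⟫ - (0:ℝ) * X.2.2 = (0:ℝ)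
    rw [real_inner_smul_right, rinner_I_self]; ring

lemma expAd_apply (X : S n) (hX : X.1 = 0) (Y : S n) :
    expAd n X Y = Y + bra n X Y := by
  unfold expAd
  have hsq : ad n X * ad n X = 0 := by
    refine ContinuousLinearMap.ext fun Y => ?_
    rw [ContinuousLinearMap.mul_apply, ad_apply, ad_apply, bra_bra_self _ _ hX]
    rfl
  rw [exp_sq_zero _ hsq]
  rfl

lemma mem_map_expAd (X : S n) (hX : X.1 = 0) (𝔥 : Submodule ℝ (S n)) (x : S n) :
    x ∈ Submodule.map (expAd n X).toLinearMap 𝔥 ↔ ∃ y ∈ 𝔥, y + bra n X y = x := by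
  constructor
  · rintro ⟨y, hy, rfl⟩
    exact ⟨y, hy, (expAd_apply X hX y).symm⟩
  · rintro ⟨y, hy, rfl⟩
    exact ⟨y, hy, expAd_apply X hX y⟩

lemma sInner_add_right (X Y Y' : S n) :
    sInner n X (Y + Y') = sInner n X Y + sInner n X Y' := by
  unfold sInner
  show X.1 * (Y.1 + Y'.1) + ⟪X.2.1, Y.2.1 + Y'.2.1⟫ + X.2.2 * (Y.2.2 + Y'.2.2) = _
  rw [inner_add_right]; ring

lemma sInner_smul_right (c : ℝ) (X Y : S n) :
    sInner n X (c • Y) = c * sInner n X Y := by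
  unfold sInner
  show X.1 * (c * Y.1) + ⟪X.2.1, c • Y.2.1⟫ + X.2.2 * (c * Y.2.2) = _
  rw [real_inner_smul_right]; ring

lemma Js_apply (X : S n) : Js n X = (-X.2.2, Complex.I • X.2.1, X.1) := rfl

lemma JsJs (X : S n) : Js n (Js n X) = -X := by
  rw [Js_apply, Js_apply]
  refine Prod.ext ?_ (Prod.ext ?_ ?_) <;> simp [II_smul]

/-- The complex structure of `E` as a real-linear endomorphism. -/
def JE (n : ℕ) : E n →ₗ[ℝ] E n where
  toFun u := Complex.I • u
  map_add' u v := smul_add _ _ _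
  map_smul' c u := smul_comm _ _ _

lemma csup (C W : Submodule ℝ (E n)) (h : C ≤ W) : W ≤ C ⊔ (W ⊓ Cᗮ) := by
  intro x hx
  have hc : (Submodule.orthogonalProjectionOnto C x : E n) ∈ C := Submodule.coe_mem _
  refine Submodule.mem_sup.2 ⟨(Submodule.orthogonalProjectionOnto C x : E n), hc,
    x - (Submodule.orthogonalProjectionOnto C x : E n),
    ⟨Submodule.sub_mem _ hx (h hc), Submodule.sub_starProjection_mem_orthogonal x⟩, add_sub_cancel _ _⟩

lemma mem_sup4 {A B C D : Submodule ℝ (S n)} (x : S n) :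
    x ∈ A ⊔ B ⊔ C ⊔ D ↔
      ∃ a ∈ A, ∃ b ∈ B, ∃ c ∈ C, ∃ d ∈ D, x = a + b + c + d := by
  constructor
  · intro hx
    obtain ⟨y, hy, d, hd, rfl⟩ := Submodule.mem_sup.1 hx
    obtain ⟨z, hz, c, hc, rfl⟩ := Submodule.mem_sup.1 hy
    obtain ⟨a, ha, b, hb, rfl⟩ := Submodule.mem_sup.1 hz
    exact ⟨a, ha, b, hb, c, hc, d, hd, rfl⟩
  · rintro ⟨a, ha, b, hb, c, hc, d, hd, rfl⟩
    exact Submodule.add_mem _ (Submodule.add_mem _ (Submodule.add_mem _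
      (Submodule.mem_sup_left (Submodule.mem_sup_left (Submodule.mem_sup_left ha)))
      (Submodule.mem_sup_left (Submodule.mem_sup_left (Submodule.mem_sup_right hb))))
      (Submodule.mem_sup_left (Submodule.mem_sup_right hc))) (Submodule.mem_sup_right hd)

set_option linter.unusedVariables false in
lemma cpx_isComplex (V : Submodule ℝ (E n)) :
    IsComplexE n (V ⊓ Submodule.comap (JE n) V) := by
  intro u hu
  refine ⟨hu.2, ?_⟩
  show Complex.I • Complex.I • u ∈ V
  rw [II_smul]
  exact V.neg_mem hu.1

end Aux

section StarComp

variable {n : ℕ}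

/-- The projection of `inE x` away from the complex plane spanned by `w₁ = (1, m₁, s)`
and `J w₁`, used in the CR argument. -/
def ust (n : ℕ) (m₁ : E n) (s : ℝ) (x : E n) : S n :=
  (-(⟪x, m₁⟫/(1 + ‖m₁‖^2 + s^2)) + (⟪x, Complex.I • m₁⟫/(1 + ‖m₁‖^2 + s^2)) * s,
   x - (⟪x, m₁⟫/(1 + ‖m₁‖^2 + s^2)) • m₁
     - (⟪x, Complex.I • m₁⟫/(1 + ‖m₁‖^2 + s^2)) • (Complex.I • m₁),
   -(⟪x, m₁⟫/(1 + ‖m₁‖^2 + s^2)) * s - ⟪x, Complex.I • m₁⟫/(1 + ‖m₁‖^2 + s^2))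

lemma ust_eq (m₁ : E n) (s : ℝ) (x : E n) :
    ust n m₁ s x = inE n x - (⟪x, m₁⟫/(1 + ‖m₁‖^2 + s^2)) • (((1:ℝ), m₁, s) : S n)
      - (⟪x, Complex.I • m₁⟫/(1 + ‖m₁‖^2 + s^2)) • ((-s, Complex.I • m₁, (1:ℝ)) : S n) := by
  unfold ust
  refine Prod.ext ?_ (Prod.ext ?_ ?_)
  · show -(⟪x, m₁⟫/(1 + ‖m₁‖^2 + s^2)) + (⟪x, Complex.I • m₁⟫/(1 + ‖m₁‖^2 + s^2)) * s
      = 0 - ⟪x, m₁⟫/(1 + ‖m₁‖^2 + s^2) * 1 - ⟪x, Complex.I • m₁⟫/(1 + ‖m₁‖^2 + s^2) * (-s)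
    ring
  · rfl
  · show -(⟪x, m₁⟫/(1 + ‖m₁‖^2 + s^2)) * s - ⟪x, Complex.I • m₁⟫/(1 + ‖m₁‖^2 + s^2)
      = 0 - ⟪x, m₁⟫/(1 + ‖m₁‖^2 + s^2) * s - ⟪x, Complex.I • m₁⟫/(1 + ‖m₁‖^2 + s^2) * 1
    ring

lemma sInner_ust_w₁ (m₁ : E n) (s : ℝ) (x : E n) :
    sInner n (ust n m₁ s x) (((1:ℝ), m₁, s) : S n) = 0 := by
  have hG : (1 + ‖m₁‖^2 + s^2 : ℝ) ≠ 0 := by positivity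
  show (-(⟪x, m₁⟫/(1 + ‖m₁‖^2 + s^2)) + (⟪x, Complex.I • m₁⟫/(1 + ‖m₁‖^2 + s^2)) * s) * 1
      + ⟪x - (⟪x, m₁⟫/(1 + ‖m₁‖^2 + s^2)) • m₁
          - (⟪x, Complex.I • m₁⟫/(1 + ‖m₁‖^2 + s^2)) • (Complex.I • m₁), m₁⟫
      + (-(⟪x, m₁⟫/(1 + ‖m₁‖^2 + s^2)) * s - ⟪x, Complex.I • m₁⟫/(1 + ‖m₁‖^2 + s^2)) * s = 0
  rw [inner_sub_left, inner_sub_left, real_inner_smul_left, real_inner_smul_left,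
    rinner_I_self, real_inner_self_eq_norm_sq]
  field_simp
  ring

lemma sInner_ust_jw₁ (m₁ : E n) (s : ℝ) (x : E n) :
    sInner n (ust n m₁ s x) ((-s, Complex.I • m₁, (1:ℝ)) : S n) = 0 := by
  have hG : (1 + ‖m₁‖^2 + s^2 : ℝ) ≠ 0 := by positivity
  show (-(⟪x, m₁⟫/(1 + ‖m₁‖^2 + s^2)) + (⟪x, Complex.I • m₁⟫/(1 + ‖m₁‖^2 + s^2)) * s) * (-s)
      + ⟪x - (⟪x, m₁⟫/(1 + ‖m₁‖^2 + s^2)) • m₁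
          - (⟪x, Complex.I • m₁⟫/(1 + ‖m₁‖^2 + s^2)) • (Complex.I • m₁), Complex.I • m₁⟫
      + (-(⟪x, m₁⟫/(1 + ‖m₁‖^2 + s^2)) * s - ⟪x, Complex.I • m₁⟫/(1 + ‖m₁‖^2 + s^2)) * 1 = 0
  rw [inner_sub_left, inner_sub_left, real_inner_smul_left, real_inner_smul_left,
    rinner_self_I, rinner_I_I, real_inner_self_eq_norm_sq]
  field_simp
  ring

lemma sInner_ust_pure (m₁ : E n) (s : ℝ) (x : E n) (m : S n) (hm1 : m.1 = 0)
    (hm3 : m.2.2 = 0) (h1 : ⟪x, m.2.1⟫ = 0) (h2 : ⟪m₁, m.2.1⟫ = 0)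
    (h3 : ⟪Complex.I • m₁, m.2.1⟫ = 0) :
    sInner n (ust n m₁ s x) m = 0 := by
  show (ust n m₁ s x).1 * m.1 + ⟪(ust n m₁ s x).2.1, m.2.1⟫ + (ust n m₁ s x).2.2 * m.2.2 = 0
  rw [hm1, hm3]
  have hE : (ust n m₁ s x).2.1 = x - (⟪x, m₁⟫/(1 + ‖m₁‖^2 + s^2)) • m₁
      - (⟪x, Complex.I • m₁⟫/(1 + ‖m₁‖^2 + s^2)) • (Complex.I • m₁) := rfl
  rw [hE, inner_sub_left, inner_sub_left, real_inner_smul_left, real_inner_smul_left,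
    h1, h2, h3]
  ring

set_option maxHeartbeats 4000000 in
set_option maxRecDepth 8000 in
lemma star_main (m₁ : E n) (s : ℝ) (x y : E n)
    (h0 : sInner n (Js n (ust n m₁ s x)) (ust n m₁ s y) = 0) :
    (1 + ‖m₁‖^2 + s^2) * ⟪Complex.I • x, y⟫
      = ⟪x, m₁⟫ * ⟪y, Complex.I • m₁⟫ - ⟪y, m₁⟫ * ⟪x, Complex.I • m₁⟫ := by
  have hG : (1 + ‖m₁‖^2 + s^2 : ℝ) ≠ 0 := by positivity
  have hE : Complex.I • (ust n m₁ s x).2.1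
      = Complex.I • x - (⟪x, m₁⟫/(1 + ‖m₁‖^2 + s^2)) • (Complex.I • m₁)
        + (⟪x, Complex.I • m₁⟫/(1 + ‖m₁‖^2 + s^2)) • m₁ := by
    show Complex.I • (x - (⟪x, m₁⟫/(1 + ‖m₁‖^2 + s^2)) • m₁
        - (⟪x, Complex.I • m₁⟫/(1 + ‖m₁‖^2 + s^2)) • (Complex.I • m₁)) = _
    rw [smul_sub, smul_sub, smul_comm Complex.I (⟪x, m₁⟫/(1 + ‖m₁‖^2 + s^2)) m₁,
      smul_comm Complex.I (⟪x, Complex.I • m₁⟫/(1 + ‖m₁‖^2 + s^2)) (Complex.I • m₁),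
      II_smul, smul_neg, sub_neg_eq_add]
  have h0' : sInner n (Js n (ust n m₁ s x)) (ust n m₁ s y)
      = -(ust n m₁ s x).2.2 * (ust n m₁ s y).1
        + ⟪Complex.I • (ust n m₁ s x).2.1, (ust n m₁ s y).2.1⟫
        + (ust n m₁ s x).1 * (ust n m₁ s y).2.2 := rfl
  rw [h0', hE] at h0
  have hu1 : (ust n m₁ s x).1
      = -(⟪x, m₁⟫/(1 + ‖m₁‖^2 + s^2)) + (⟪x, Complex.I • m₁⟫/(1 + ‖m₁‖^2 + s^2)) * s := rfl
  have hu3 : (ust n m₁ s x).2.2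
      = -(⟪x, m₁⟫/(1 + ‖m₁‖^2 + s^2)) * s - ⟪x, Complex.I • m₁⟫/(1 + ‖m₁‖^2 + s^2) := rfl
  have hv1 : (ust n m₁ s y).1
      = -(⟪y, m₁⟫/(1 + ‖m₁‖^2 + s^2)) + (⟪y, Complex.I • m₁⟫/(1 + ‖m₁‖^2 + s^2)) * s := rfl
  have hv3 : (ust n m₁ s y).2.2
      = -(⟪y, m₁⟫/(1 + ‖m₁‖^2 + s^2)) * s - ⟪y, Complex.I • m₁⟫/(1 + ‖m₁‖^2 + s^2) := rfl
  have hvE : (ust n m₁ s y).2.1 = y - (⟪y, m₁⟫/(1 + ‖m₁‖^2 + s^2)) • m₁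
      - (⟪y, Complex.I • m₁⟫/(1 + ‖m₁‖^2 + s^2)) • (Complex.I • m₁) := rfl
  rw [hu1, hu3, hv1, hv3, hvE] at h0
  simp only [inner_sub_left, inner_sub_right, inner_add_left, inner_add_right,
    real_inner_smul_left, real_inner_smul_right] at h0
  clear h0' hE hu1 hu3 hv1 hv3 hvE
  rw [rinner_I_skew x m₁, rinner_I_I x m₁, rinner_I_self m₁, rinner_I_I m₁ m₁,
    real_inner_comm y (Complex.I • m₁), rinner_self_I m₁, real_inner_comm y m₁,
    real_inner_self_eq_norm_sq m₁] at h0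
  set a := ⟪x, m₁⟫ with ha
  set b := ⟪x, Complex.I • m₁⟫ with hb
  set a' := ⟪y, m₁⟫ with ha'
  set b' := ⟪y, Complex.I • m₁⟫ with hb'
  set q := ⟪Complex.I • x, y⟫ with hq
  set N := ‖m₁‖^2 with hN
  clear_value a b a' b' q N
  clear ha hb ha' hb' hq hN
  have hG' : (1 + N + s^2 : ℝ) ≠ 0 := hG
  simp only [div_eq_mul_inv] at h0
  set w : ℝ := (1 + N + s^2)⁻¹ with hwdef
  have hw : (1 + N + s^2) * w = 1 := mul_inv_cancel₀ hG'
  clear_value w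
  linear_combination (1 + N + s^2) * h0
    - (a * b' - a' * b) * ((1 + N + s^2) * w - 1) * hw

end StarComp

section Cases

variable {n : ℕ}

lemma mem_comap_inE {V : Submodule ℝ (S n)} {u : E n} :
    u ∈ Submodule.comap (inE n) V ↔ ((0:ℝ), u, (0:ℝ)) ∈ V := Iff.rfl

lemma inE_apply (u : E n) : inE n u = ((0:ℝ), u, (0:ℝ)) := rfl

lemma smul_tri (c a x : ℝ) (u : E n) : c • ((a, u, x) : S n) = (c * a, c • u, c * x) := rfl

lemma caseA1 (𝔥 : Submodule ℝ (S n))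
    (hCR : IsCRS n (𝔥 : Set (S n)))
    (hB : ∀ h ∈ 𝔥, (h : S n).1 = 0) (hZ : Z n ∈ 𝔥) :
    ∃ X : S n, ∃ 𝔟 𝔷 : Submodule ℝ (S n), ∃ 𝔠 𝔯 : Submodule ℝ (E n),
      𝔟 ≤ Submodule.span ℝ {B n} ∧
      IsComplexE n 𝔠 ∧
      TotallyRealE n 𝔯 ∧
      (∀ u ∈ 𝔯, ∀ v ∈ 𝔠, ⟪u, v⟫ = 0) ∧
      𝔷 ≤ Submodule.span ℝ {Z n} ∧
      (𝔠 ≠ ⊥ → 𝔷 = Submodule.span ℝ {Z n}) ∧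
      Submodule.map (expAd n X).toLinearMap 𝔥 =
        𝔟 ⊔ Submodule.map (inE n) 𝔠 ⊔ Submodule.map (inE n) 𝔯 ⊔ 𝔷 := by
  classical
  set V : Submodule ℝ (E n) := Submodule.comap (inE n) 𝔥 with hV
  set 𝔠 : Submodule ℝ (E n) := V ⊓ Submodule.comap (JE n) V with h𝔠
  set 𝔯 : Submodule ℝ (E n) := V ⊓ 𝔠ᗮ with h𝔯
  have h𝔠V : 𝔠 ≤ V := inf_le_left
  -- characterization of maxCS
  have hmax : ∀ m ∈ maxCS n (𝔥 : Set (S n)),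
      m.1 = 0 ∧ m.2.2 = 0 ∧ m.2.1 ∈ 𝔠 := by
    rintro m ⟨hm, hjm⟩
    have h1 : m.1 = 0 := hB m hm
    have h2 : m.2.2 = 0 := by
      have := hB _ hjm
      rw [Js_apply] at this
      simpa using this
    have hmeq : m = ((0:ℝ), m.2.1, (0:ℝ)) := by
      refine Prod.ext h1 (Prod.ext rfl h2)
    have hm21 : m.2.1 ∈ V := by
      rw [mem_comap_inE, ← hmeq]; exact hm
    have hjm21 : Complex.I • m.2.1 ∈ V := by
      have hjeq : Js n m = ((0:ℝ), Complex.I • m.2.1, (0:ℝ)) := by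
        rw [Js_apply]
        exact Prod.ext (by rw [h2, neg_zero]) (Prod.ext rfl h1)
      rw [mem_comap_inE, ← hjeq]; exact hjm
    exact ⟨h1, h2, hm21, hjm21⟩
  have horthE : ∀ x ∈ 𝔯, ∀ m ∈ maxCS n (𝔥 : Set (S n)), sInner n (inE n x) m = 0 := by
    intro x hx m hm
    obtain ⟨h1, h2, hc⟩ := hmax m hm
    show (0:ℝ) * m.1 + ⟪x, m.2.1⟫ + (0:ℝ) * m.2.2 = 0
    have : ⟪m.2.1, x⟫ = 0 := (Submodule.mem_orthogonal _ _).1 hx.2 _ hc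
    rw [real_inner_comm] at this
    rw [this]; ring
  refine ⟨0, ⊥, Submodule.span ℝ {Z n}, 𝔠, 𝔯, bot_le, cpx_isComplex V, ?_, ?_, le_rfl,
    fun _ => rfl, ?_⟩
  · -- totally real
    intro u hu v hv
    have h0 := hCR (inE n u) hu.1 (inE n v) hv.1 (horthE u hu) (horthE v hv)
    show ⟪Complex.I • u, v⟫ = 0
    have h1 : sInner n (Js n (inE n u)) (inE n v) = ⟪Complex.I • u, v⟫ := by
      show -(0:ℝ) * (0:ℝ) + ⟪Complex.I • u, v⟫ + (0:ℝ) * (0:ℝ) = _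
      ring
    rw [h1] at h0
    exact h0
  · -- orthogonality 𝔯 ⊥ 𝔠
    intro u hu v hv
    have : ⟪v, u⟫ = 0 := (Submodule.mem_orthogonal _ _).1 hu.2 _ hv
    rw [real_inner_comm] at this; exact this
  · -- map equality
    have hid : Submodule.map (expAd n (0 : S n)).toLinearMap 𝔥 = 𝔥 := by
      ext x
      rw [mem_map_expAd _ rfl]
      constructor
      · rintro ⟨y, hy, rfl⟩
        have : bra n (0 : S n) y = 0 := by
          rw [bra_of_fst_zero _ _ rfl]
          refine Prod.ext rfl (Prod.ext ?_ ?_)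
          · show (-((2:ℝ)⁻¹ * y.1)) • (0 : E n) = (0 : E n); simp
          · show ⟪Complex.I • (0 : E n), y.2.1⟫ - y.1 * (0:ℝ) = (0:ℝ); simp
        rw [this, add_zero]; exact hy
      · intro hx
        refine ⟨x, hx, ?_⟩
        have : bra n (0 : S n) x = 0 := by
          rw [bra_of_fst_zero _ _ rfl]
          refine Prod.ext rfl (Prod.ext ?_ ?_)
          · show (-((2:ℝ)⁻¹ * x.1)) • (0 : E n) = (0 : E n); simp
          · show ⟪Complex.I • (0 : E n), x.2.1⟫ - x.1 * (0:ℝ) = (0:ℝ); simp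
        rw [this, add_zero]
    rw [hid]
    ext x
    rw [mem_sup4]
    constructor
    · intro hx
      have h1 : x.1 = 0 := hB x hx
      have hxE : x.2.1 ∈ V := by
        rw [mem_comap_inE]
        have : ((0:ℝ), x.2.1, (0:ℝ)) = x - x.2.2 • Z n := by
          refine Prod.ext ?_ (Prod.ext ?_ ?_)
          · show (0:ℝ) = x.1 - x.2.2 * 0; rw [h1]; ring
          · show x.2.1 = x.2.1 - x.2.2 • (0 : E n); simp
          · show (0:ℝ) = x.2.2 - x.2.2 * 1; ring
        rw [this]
        exact Submodule.sub_mem _ hx (Submodule.smul_mem _ _ hZ)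
      have := csup 𝔠 V h𝔠V hxE
      obtain ⟨c, hc, r, hr, hcr⟩ := Submodule.mem_sup.1 this
      refine ⟨0, Submodule.zero_mem _, inE n c, ⟨c, hc, rfl⟩, inE n r, ⟨r, hr, rfl⟩,
        x.2.2 • Z n, Submodule.smul_mem _ _ (Submodule.mem_span_singleton_self _), ?_⟩
      refine Prod.ext ?_ (Prod.ext ?_ ?_)
      · show x.1 = 0 + 0 + 0 + x.2.2 * 0; rw [h1]; ring
      · show x.2.1 = 0 + c + r + x.2.2 • (0 : E n)
        rw [← hcr]; simp
      · show x.2.2 = 0 + 0 + 0 + x.2.2 * 1; ring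
    · rintro ⟨a, ha, b, hb, c, hc, d, hd, rfl⟩
      rw [Submodule.mem_bot] at ha
      obtain ⟨cb, hcb, rfl⟩ := hb
      obtain ⟨cc, hcc, rfl⟩ := hc
      obtain ⟨t, rfl⟩ := Submodule.mem_span_singleton.1 hd
      exact Submodule.add_mem _ (Submodule.add_mem _ (Submodule.add_mem _
        (ha ▸ Submodule.zero_mem _) (h𝔠V hcb)) hcc.1) (Submodule.smul_mem _ _ hZ)

end Cases

section CaseA2

variable {n : ℕ}

/-- Projection of `𝔰` onto `E`. -/
def pE (n : ℕ) : S n →ₗ[ℝ] E n where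
  toFun x := x.2.1
  map_add' x y := rfl
  map_smul' c x := rfl

lemma caseA2 (𝔥 : Submodule ℝ (S n))
    (halg : ∀ X ∈ 𝔥, ∀ Y ∈ 𝔥, bra n X Y ∈ 𝔥)
    (hB : ∀ h ∈ 𝔥, (h : S n).1 = 0) (hZ : Z n ∉ 𝔥) :
    ∃ X : S n, ∃ 𝔟 𝔷 : Submodule ℝ (S n), ∃ 𝔠 𝔯 : Submodule ℝ (E n),
      𝔟 ≤ Submodule.span ℝ {B n} ∧
      IsComplexE n 𝔠 ∧
      TotallyRealE n 𝔯 ∧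
      (∀ u ∈ 𝔯, ∀ v ∈ 𝔠, ⟪u, v⟫ = 0) ∧
      𝔷 ≤ Submodule.span ℝ {Z n} ∧
      (𝔠 ≠ ⊥ → 𝔷 = Submodule.span ℝ {Z n}) ∧
      Submodule.map (expAd n X).toLinearMap 𝔥 =
        𝔟 ⊔ Submodule.map (inE n) 𝔠 ⊔ Submodule.map (inE n) 𝔯 ⊔ 𝔷 := by
  classical
  set V : Submodule ℝ (E n) := Submodule.map (pE n) 𝔥 with hV
  have hZ0 : ∀ t : ℝ, ((0:ℝ), (0 : E n), t) ∈ 𝔥 → t = 0 := by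
    intro t ht
    by_contra h0
    apply hZ
    have : Z n = t⁻¹ • (((0:ℝ), (0 : E n), t) : S n) := by
      rw [smul_tri]
      refine Prod.ext ?_ (Prod.ext ?_ ?_)
      · show (0:ℝ) = t⁻¹ * 0; ring
      · show (0 : E n) = t⁻¹ • (0 : E n); simp
      · show (1:ℝ) = t⁻¹ * t; rw [inv_mul_cancel₀ h0]
    rw [this]
    exact Submodule.smul_mem _ _ ht
  have hVmem : ∀ u : E n, u ∈ V ↔ ∃ y : ℝ, ((0:ℝ), u, y) ∈ 𝔥 := by
    intro u
    constructor
    · rintro ⟨h, hh, rfl⟩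
      refine ⟨h.2.2, ?_⟩
      have : ((0:ℝ), pE n h, h.2.2) = h := Prod.ext (hB h hh).symm rfl
      rw [this]; exact hh
    · rintro ⟨y, hy⟩
      exact ⟨((0:ℝ), u, y), hy, rfl⟩
  set f : E n → ℝ := fun u =>
    if h : ∃ y : ℝ, ((0:ℝ), u, y) ∈ 𝔥 then h.choose else 0 with hf
  have hf1 : ∀ u ∈ V, ((0:ℝ), u, f u) ∈ 𝔥 := by
    intro u hu
    obtain ⟨y, hy⟩ := (hVmem u).1 hu
    have hex : ∃ y : ℝ, ((0:ℝ), u, y) ∈ 𝔥 := ⟨y, hy⟩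
    rw [hf]
    simp only [dif_pos hex]
    exact hex.choose_spec
  have hf2 : ∀ (u : E n) (y : ℝ), ((0:ℝ), u, y) ∈ 𝔥 → f u = y := by
    intro u y hy
    have hu : u ∈ V := (hVmem u).2 ⟨y, hy⟩
    have h1 := hf1 u hu
    have h2 : (((0:ℝ), u, f u) : S n) - ((0:ℝ), u, y) ∈ 𝔥 := Submodule.sub_mem _ h1 hy
    have h3 : (((0:ℝ), u, f u) : S n) - ((0:ℝ), u, y) = ((0:ℝ), (0:E n), f u - y) := by
      refine Prod.ext ?_ (Prod.ext ?_ ?_) <;> simp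
    rw [h3] at h2
    have := hZ0 _ h2
    linarith
  -- extension of the tilt functional
  have hfadd : ∀ u ∈ V, ∀ v ∈ V, f (u + v) = f u + f v := by
    intro u hu v hv
    refine hf2 _ _ ?_
    have := Submodule.add_mem _ (hf1 u hu) (hf1 v hv)
    have heq : (((0:ℝ), u, f u) : S n) + ((0:ℝ), v, f v) = ((0:ℝ), u + v, f u + f v) := by
      refine Prod.ext ?_ (Prod.ext ?_ ?_) <;> simp
    rw [heq] at this; exact this
  have hfsmul : ∀ (c : ℝ), ∀ u ∈ V, f (c • u) = c * f u := by
    intro c u hu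
    refine hf2 _ _ ?_
    have := Submodule.smul_mem _ c (hf1 u hu)
    have heq : c • (((0:ℝ), u, f u) : S n) = ((0:ℝ), c • u, c * f u) := by
      rw [smul_tri]
      refine Prod.ext ?_ (Prod.ext rfl rfl)
      · show c * 0 = (0:ℝ); ring
    rw [heq] at this; exact this
  set F : E n →ₗ[ℝ] ℝ :=
    { toFun := fun u => f ((Submodule.orthogonalProjectionOnto V u : E n))
      map_add' := by
        intro u v
        show f ((Submodule.orthogonalProjectionOnto V (u + v) : E n)) =
          f ((Submodule.orthogonalProjectionOnto V u : E n)) + f ((Submodule.orthogonalProjectionOnto V v : E n))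
        have heq : ((Submodule.orthogonalProjectionOnto V (u + v) : E n))
            = (Submodule.orthogonalProjectionOnto V u : E n) + (Submodule.orthogonalProjectionOnto V v : E n) := by
          rw [map_add]; rfl
        rw [heq]
        exact hfadd _ (Submodule.coe_mem _) _ (Submodule.coe_mem _)
      map_smul' := by
        intro c u
        show f ((Submodule.orthogonalProjectionOnto V (c • u) : E n)) = c * f ((Submodule.orthogonalProjectionOnto V u : E n))
        have heq : ((Submodule.orthogonalProjectionOnto V (c • u) : E n))
            = c • (Submodule.orthogonalProjectionOnto V u : E n) := by
          rw [map_smul]; rfl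
        rw [heq]
        exact hfsmul c _ (Submodule.coe_mem _) } with hF
  have hFval : ∀ u ∈ V, F u = f u := by
    intro u hu
    show f ((Submodule.orthogonalProjectionOnto V u : E n)) = f u
    rw [Submodule.coe_orthogonalProjectionOnto_apply, Submodule.starProjection_eq_self_iff.2 hu]
  set C : E n := (InnerProductSpace.toDual ℝ (E n)).symm F.toContinuousLinearMap with hC
  have hCval : ∀ u : E n, ⟪C, u⟫ = F u := by
    intro u
    rw [hC]
    exact InnerProductSpace.toDual_symm_apply
  set X : S n := ((0:ℝ), Complex.I • C, (0:ℝ)) with hX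
  have hphi : ∀ y : S n, y.1 = 0 → expAd n X y = ((0:ℝ), y.2.1, y.2.2 - ⟪C, y.2.1⟫) := by
    intro y hy1
    rw [expAd_apply X rfl, bra_of_fst_zero X y rfl]
    refine Prod.ext ?_ (Prod.ext ?_ ?_)
    · show y.1 + 0 = (0:ℝ); rw [hy1]; ring
    · show y.2.1 + (-((2:ℝ)⁻¹ * y.1)) • (Complex.I • C) = y.2.1
      rw [hy1]; simp
    · show y.2.2 + (⟪Complex.I • (Complex.I • C), y.2.1⟫ - y.1 * (0:ℝ)) = y.2.2 - ⟪C, y.2.1⟫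
      rw [II_smul, inner_neg_left, hy1]; ring
  have hTR : TotallyRealE n V := by
    intro u hu v hv
    have hb := halg _ (hf1 u hu) _ (hf1 v hv)
    have heq : bra n (((0:ℝ), u, f u) : S n) ((0:ℝ), v, f v) = ((0:ℝ), (0:E n), ⟪Complex.I • u, v⟫) := by
      unfold bra
      refine Prod.ext rfl (Prod.ext ?_ ?_)
      · show (2⁻¹:ℝ) • ((0:ℝ) • v - (0:ℝ) • u) = (0 : E n); simp
      · show (0:ℝ) * f v - 0 * f u + ⟪Complex.I • u, v⟫ = ⟪Complex.I • u, v⟫; ring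
    rw [heq] at hb
    exact hZ0 _ hb
  refine ⟨X, ⊥, ⊥, ⊥, V, bot_le, ?_, hTR, ?_, bot_le, ?_, ?_⟩
  · intro u hu
    rw [Submodule.mem_bot] at hu
    rw [hu, smul_zero]
    exact Submodule.zero_mem _
  · intro u _ v hv
    rw [Submodule.mem_bot] at hv
    rw [hv, inner_zero_right]
  · intro hc; exact absurd rfl hc
  · ext x
    rw [mem_sup4]
    constructor
    · rintro ⟨h, hh, rfl⟩
      have h1 : h.1 = 0 := hB h hh
      have hu : h.2.1 ∈ V := ⟨h, hh, rfl⟩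
      have hfh : f h.2.1 = h.2.2 := by
        refine hf2 _ _ ?_
        have : ((0:ℝ), h.2.1, h.2.2) = h := Prod.ext h1.symm rfl
        rw [this]; exact hh
      refine ⟨0, Submodule.zero_mem _, 0, Submodule.zero_mem _,
        inE n h.2.1, ⟨h.2.1, hu, rfl⟩, 0, Submodule.zero_mem _, ?_⟩
      show expAd n X h = 0 + 0 + inE n h.2.1 + 0
      rw [hphi h h1]
      have hCh : ⟪C, h.2.1⟫ = h.2.2 := by
        rw [hCval, hFval _ hu, hfh]
      refine Prod.ext ?_ (Prod.ext ?_ ?_)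
      · show (0:ℝ) = 0 + 0 + 0 + 0; ring
      · show h.2.1 = 0 + 0 + h.2.1 + 0; simp
      · show h.2.2 - ⟪C, h.2.1⟫ = 0 + 0 + 0 + 0; rw [hCh]; ring
    · rintro ⟨a, ha, b, hb, c, hc, d, hd, rfl⟩
      rw [Submodule.mem_bot] at ha hd
      obtain ⟨cb, hcb, rfl⟩ := hb
      have hcb : cb = 0 := by simpa using hcb
      obtain ⟨u, hu, rfl⟩ := hc
      refine ⟨((0:ℝ), u, f u), hf1 u hu, ?_⟩
      show expAd n X ((0:ℝ), u, f u) = _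
      rw [hphi _ rfl]
      have hCu : ⟪C, u⟫ = f u := by rw [hCval, hFval _ hu]
      refine Prod.ext ?_ (Prod.ext ?_ ?_)
      · show (0:ℝ) = a.1 + (inE n cb).1 + 0 + d.1
        rw [ha, hd, hcb]; simp [inE_apply]
      · show u = a.2.1 + (inE n cb).2.1 + u + d.2.1
        rw [ha, hd, hcb]; simp [inE_apply]
      · show f u - ⟪C, u⟫ = a.2.2 + (inE n cb).2.2 + 0 + d.2.2
        rw [ha, hd, hcb, hCu]; simp [inE_apply]

end CaseA2

section CaseB0

variable {n : ℕ}

lemma caseB0 (𝔥 : Submodule ℝ (S n))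
    (halg : ∀ X ∈ 𝔥, ∀ Y ∈ 𝔥, bra n X Y ∈ 𝔥)
    (h₀ : S n) (h₀m : h₀ ∈ 𝔥) (h₀1 : h₀.1 ≠ 0) (hZ : Z n ∉ 𝔥) :
    ∃ X : S n, ∃ 𝔟 𝔷 : Submodule ℝ (S n), ∃ 𝔠 𝔯 : Submodule ℝ (E n),
      𝔟 ≤ Submodule.span ℝ {B n} ∧
      IsComplexE n 𝔠 ∧
      TotallyRealE n 𝔯 ∧
      (∀ u ∈ 𝔯, ∀ v ∈ 𝔠, ⟪u, v⟫ = 0) ∧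
      𝔷 ≤ Submodule.span ℝ {Z n} ∧
      (𝔠 ≠ ⊥ → 𝔷 = Submodule.span ℝ {Z n}) ∧
      Submodule.map (expAd n X).toLinearMap 𝔥 =
        𝔟 ⊔ Submodule.map (inE n) 𝔠 ⊔ Submodule.map (inE n) 𝔯 ⊔ 𝔷 := by
  classical
  have hZ0 : ∀ t : ℝ, ((0:ℝ), (0 : E n), t) ∈ 𝔥 → t = 0 := by
    intro t ht
    by_contra h0
    apply hZ
    have : Z n = t⁻¹ • (((0:ℝ), (0 : E n), t) : S n) := by
      rw [smul_tri]
      refine Prod.ext ?_ (Prod.ext ?_ ?_)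
      · show (0:ℝ) = t⁻¹ * 0; ring
      · show (0 : E n) = t⁻¹ • (0 : E n); simp
      · show (1:ℝ) = t⁻¹ * t; rw [inv_mul_cancel₀ h0]
    rw [this]
    exact Submodule.smul_mem _ _ ht
  set U₀ : E n := (h₀.1)⁻¹ • h₀.2.1 with hU₀def
  set x₀ : ℝ := (h₀.1)⁻¹ * h₀.2.2 with hx₀def
  set X₀ : S n := ((1:ℝ), U₀, x₀) with hX₀def
  have hX₀m : X₀ ∈ 𝔥 := by
    have : X₀ = (h₀.1)⁻¹ • h₀ := by
      refine Prod.ext ?_ (Prod.ext rfl rfl)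
      · show (1:ℝ) = (h₀.1)⁻¹ * h₀.1; rw [inv_mul_cancel₀ h₀1]
    rw [this]
    exact Submodule.smul_mem _ _ h₀m
  -- forced tilt
  have htilt : ∀ k ∈ 𝔥, (k : S n).1 = 0 → k.2.2 = -2 * ⟪Complex.I • U₀, k.2.1⟫ := by
    intro k hk hk1
    have hb := halg X₀ hX₀m k hk
    have hbeq : bra n X₀ k = ((0:ℝ), (2⁻¹:ℝ) • k.2.1, k.2.2 + ⟪Complex.I • U₀, k.2.1⟫) := by
      unfold bra
      refine Prod.ext rfl (Prod.ext ?_ ?_)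
      · show (2⁻¹:ℝ) • (X₀.1 • k.2.1 - k.1 • X₀.2.1) = (2⁻¹:ℝ) • k.2.1
        rw [hk1]
        show (2⁻¹:ℝ) • ((1:ℝ) • k.2.1 - (0:ℝ) • U₀) = _
        simp
      · show X₀.1 * k.2.2 - k.1 * X₀.2.2 + ⟪Complex.I • X₀.2.1, k.2.1⟫ = _
        rw [hk1]
        show (1:ℝ) * k.2.2 - 0 * x₀ + ⟪Complex.I • U₀, k.2.1⟫ = _
        ring
    have hmem : (2:ℝ) • bra n X₀ k - k ∈ 𝔥 :=
      Submodule.sub_mem _ (Submodule.smul_mem _ _ hb) hk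
    have heq : (2:ℝ) • bra n X₀ k - k
        = ((0:ℝ), (0:E n), k.2.2 + 2 * ⟪Complex.I • U₀, k.2.1⟫) := by
      rw [hbeq]
      refine Prod.ext ?_ (Prod.ext ?_ ?_)
      · show (2:ℝ) * 0 - k.1 = 0; rw [hk1]; ring
      · show (2:ℝ) • ((2⁻¹:ℝ) • k.2.1) - k.2.1 = 0
        rw [smul_smul]; norm_num
      · show (2:ℝ) * (k.2.2 + ⟪Complex.I • U₀, k.2.1⟫) - k.2.2 = _; ring
    rw [heq] at hmem
    have := hZ0 _ hmem
    linarith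
  set L : E n →ₗ[ℝ] S n :=
    { toFun := fun u => ((0:ℝ), u, -2 * ⟪Complex.I • U₀, u⟫)
      map_add' := by
        intro u v
        show ((0:ℝ), u + v, -2 * ⟪Complex.I • U₀, u + v⟫)
          = (((0:ℝ), u, -2 * ⟪Complex.I • U₀, u⟫) : S n) + ((0:ℝ), v, -2 * ⟪Complex.I • U₀, v⟫)
        rw [inner_add_right]
        refine Prod.ext ?_ (Prod.ext rfl ?_)
        · show (0:ℝ) = 0 + 0; ring
        · show -2 * (⟪Complex.I • U₀, u⟫ + ⟪Complex.I • U₀, v⟫)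
            = -2 * ⟪Complex.I • U₀, u⟫ + -2 * ⟪Complex.I • U₀, v⟫; ring
      map_smul' := by
        intro c u
        show ((0:ℝ), c • u, -2 * ⟪Complex.I • U₀, c • u⟫)
          = c • (((0:ℝ), u, -2 * ⟪Complex.I • U₀, u⟫) : S n)
        rw [real_inner_smul_right, smul_tri]
        refine Prod.ext ?_ (Prod.ext rfl ?_)
        · show (0:ℝ) = c * 0; ring
        · show -2 * (c * ⟪Complex.I • U₀, u⟫) = c * (-2 * ⟪Complex.I • U₀, u⟫); ring } with hL
  set V : Submodule ℝ (E n) := Submodule.comap L 𝔥 with hV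
  have hdecompE : ∀ h ∈ 𝔥, h.2.1 - h.1 • U₀ ∈ V := by
    intro h hh
    have hk : h - h.1 • X₀ ∈ 𝔥 := Submodule.sub_mem _ hh (Submodule.smul_mem _ _ hX₀m)
    have hk1 : (h - h.1 • X₀).1 = 0 := by
      show h.1 - h.1 * 1 = 0; ring
    have hk21 : (h - h.1 • X₀).2.1 = h.2.1 - h.1 • U₀ := rfl
    have := htilt _ hk hk1
    rw [hk21] at this
    show L (h.2.1 - h.1 • U₀) ∈ 𝔥
    have hLeq : L (h.2.1 - h.1 • U₀) = h - h.1 • X₀ := by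
      refine Prod.ext ?_ (Prod.ext ?_ ?_)
      · show (0:ℝ) = h.1 - h.1 * 1; ring
      · rfl
      · show -2 * ⟪Complex.I • U₀, h.2.1 - h.1 • U₀⟫ = (h - h.1 • X₀).2.2
        rw [← this]
    rw [hLeq]
    exact hk
  have hTR : TotallyRealE n V := by
    intro u hu v hv
    have hb := halg _ hu _ hv
    have heq : bra n (L u) (L v) = ((0:ℝ), (0:E n), ⟪Complex.I • u, v⟫) := by
      unfold bra
      refine Prod.ext rfl (Prod.ext ?_ ?_)
      · show (2⁻¹:ℝ) • ((0:ℝ) • v - (0:ℝ) • u) = (0:E n); simp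
      · show (0:ℝ) * (L v).2.2 - 0 * (L u).2.2 + ⟪Complex.I • u, v⟫ = ⟪Complex.I • u, v⟫; ring
    rw [heq] at hb
    exact hZ0 _ hb
  set X : S n := ((0:ℝ), (2:ℝ) • U₀, x₀) with hXdef
  have hphi : ∀ y : S n, expAd n X y
      = (y.1, y.2.1 - y.1 • U₀, y.2.2 - y.1 * x₀ + 2 * ⟪Complex.I • U₀, y.2.1⟫) := by
    intro y
    rw [expAd_apply X rfl, bra_of_fst_zero X y rfl]
    refine Prod.ext ?_ (Prod.ext ?_ ?_)
    · show y.1 + 0 = y.1; ring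
    · show y.2.1 + (-((2:ℝ)⁻¹ * y.1)) • ((2:ℝ) • U₀) = y.2.1 - y.1 • U₀
      rw [smul_smul, sub_eq_add_neg, ← neg_smul]
      congr 2
      ring
    · show y.2.2 + (⟪Complex.I • ((2:ℝ) • U₀), y.2.1⟫ - y.1 * x₀) = _
      rw [smul_comm, real_inner_smul_left]
      ring
  refine ⟨X, Submodule.span ℝ {B n}, ⊥, ⊥, V, le_rfl, ?_, hTR, ?_, bot_le, ?_, ?_⟩
  · intro u hu
    rw [Submodule.mem_bot] at hu
    rw [hu, smul_zero]
    exact Submodule.zero_mem _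
  · intro u _ v hv
    rw [Submodule.mem_bot] at hv
    rw [hv, inner_zero_right]
  · intro hc; exact absurd rfl hc
  · ext x
    rw [mem_sup4]
    constructor
    · rintro ⟨h, hh, rfl⟩
      refine ⟨h.1 • B n, Submodule.smul_mem _ _ (Submodule.mem_span_singleton_self _),
        0, Submodule.zero_mem _,
        inE n (h.2.1 - h.1 • U₀), ⟨_, hdecompE h hh, rfl⟩, 0, Submodule.zero_mem _, ?_⟩
      show expAd n X h = _
      rw [hphi h]
      have htl := htilt _ (Submodule.sub_mem _ hh (Submodule.smul_mem _ h.1 hX₀m))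
        (by show h.1 - h.1 * 1 = 0; ring)
      have htl' : h.2.2 - h.1 * x₀ = -2 * ⟪Complex.I • U₀, h.2.1 - h.1 • U₀⟫ := htl
      rw [inner_sub_right, real_inner_smul_right, rinner_I_self] at htl'
      refine Prod.ext ?_ (Prod.ext ?_ ?_)
      · show h.1 = h.1 * 1 + 0 + 0 + 0; ring
      · show h.2.1 - h.1 • U₀ = h.1 • (0:E n) + 0 + (h.2.1 - h.1 • U₀) + 0; simp
      · show h.2.2 - h.1 * x₀ + 2 * ⟪Complex.I • U₀, h.2.1⟫ = h.1 * 0 + 0 + 0 + 0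
        rw [htl']; ring
    · rintro ⟨a, ha, b, hb, c, hc, d, hd, rfl⟩
      rw [Submodule.mem_bot] at hd
      obtain ⟨cb, hcb, rfl⟩ := hb
      have hcb : cb = 0 := by simpa using hcb
      obtain ⟨t, rfl⟩ := Submodule.mem_span_singleton.1 ha
      obtain ⟨u, hu, rfl⟩ := hc
      refine ⟨t • X₀ + L u, Submodule.add_mem _ (Submodule.smul_mem _ _ hX₀m) hu, ?_⟩
      show expAd n X (t • X₀ + L u) = _
      rw [hphi]
      rw [hcb, hd]
      refine Prod.ext ?_ (Prod.ext ?_ ?_)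
      · show t * 1 + 0 = t * 1 + (inE n (0:E n)).1 + 0 + 0
        simp [inE_apply]
      · show (t • U₀ + u) - (t * 1 + 0) • U₀ = t • (0:E n) + (inE n (0:E n)).2.1 + u + 0
        simp [inE_apply]
      · show (t * x₀ + -2 * ⟪Complex.I • U₀, u⟫) - (t * 1 + 0) * x₀
            + 2 * ⟪Complex.I • U₀, t • U₀ + u⟫ = t * 0 + (inE n (0:E n)).2.2 + 0 + 0
        rw [inner_add_right, real_inner_smul_right, rinner_I_self]
        simp only [inE_apply]
        ring

end CaseB0

section CaseB1

variable {n : ℕ}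

set_option maxHeartbeats 1600000 in
lemma caseB1 (𝔥 : Submodule ℝ (S n))
    (hCR : IsCRS n (𝔥 : Set (S n)))
    (h₀ : S n) (h₀m : h₀ ∈ 𝔥) (h₀1 : h₀.1 ≠ 0) (hZ : Z n ∈ 𝔥) :
    ∃ X : S n, ∃ 𝔟 𝔷 : Submodule ℝ (S n), ∃ 𝔠 𝔯 : Submodule ℝ (E n),
      𝔟 ≤ Submodule.span ℝ {B n} ∧
      IsComplexE n 𝔠 ∧
      TotallyRealE n 𝔯 ∧
      (∀ u ∈ 𝔯, ∀ v ∈ 𝔠, ⟪u, v⟫ = 0) ∧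
      𝔷 ≤ Submodule.span ℝ {Z n} ∧
      (𝔠 ≠ ⊥ → 𝔷 = Submodule.span ℝ {Z n}) ∧
      Submodule.map (expAd n X).toLinearMap 𝔥 =
        𝔟 ⊔ Submodule.map (inE n) 𝔠 ⊔ Submodule.map (inE n) 𝔯 ⊔ 𝔷 := by
  classical
  set V : Submodule ℝ (E n) := Submodule.comap (inE n) 𝔥 with hV
  have hZt : ∀ t : ℝ, ((0:ℝ), (0:E n), t) ∈ 𝔥 := by
    intro t
    have : (((0:ℝ), (0:E n), t) : S n) = t • Z n := by
      rw [smul_tri]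
      refine Prod.ext (by show (0:ℝ) = t * 0; ring)
        (Prod.ext (by show (0:E n) = t • (0:E n); simp) (by show t = t * 1; ring))
    rw [this]; exact Submodule.smul_mem _ _ hZ
  have hmemE : ∀ u ∈ V, ∀ t : ℝ, ((0:ℝ), u, t) ∈ 𝔥 := by
    intro u hu t
    have : (((0:ℝ), u, t) : S n) = inE n u + ((0:ℝ), (0:E n), t) := by
      refine Prod.ext (by show (0:ℝ) = 0 + 0; ring)
        (Prod.ext (by show u = u + 0; rw [add_zero]) (by show t = 0 + t; ring))
    rw [this]
    exact Submodule.add_mem _ hu (hZt t)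
  set U₀'' : E n := (h₀.1)⁻¹ • h₀.2.1 with hU₀''def
  set U₀ : E n := U₀'' - (Submodule.orthogonalProjectionOnto V U₀'' : E n) with hU₀def
  set X₁ : S n := ((1:ℝ), U₀, (0:ℝ)) with hX₁def
  have hX₁m : X₁ ∈ 𝔥 := by
    have h1 : (h₀.1)⁻¹ • h₀ ∈ 𝔥 := Submodule.smul_mem _ _ h₀m
    have h2 : X₁ = (h₀.1)⁻¹ • h₀ - inE n (Submodule.orthogonalProjectionOnto V U₀'' : E n)
        - ((0:ℝ), (0:E n), (h₀.1)⁻¹ * h₀.2.2) := by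
      refine Prod.ext ?_ (Prod.ext ?_ ?_)
      · show (1:ℝ) = (h₀.1)⁻¹ * h₀.1 - 0 - 0; rw [inv_mul_cancel₀ h₀1]; ring
      · show U₀'' - (Submodule.orthogonalProjectionOnto V U₀'' : E n)
            = (h₀.1)⁻¹ • h₀.2.1 - (Submodule.orthogonalProjectionOnto V U₀'' : E n) - 0
        rw [hU₀''def, sub_zero]
      · show (0:ℝ) = (h₀.1)⁻¹ * h₀.2.2 - 0 - (h₀.1)⁻¹ * h₀.2.2; ring
    rw [h2]
    have hproj : (Submodule.orthogonalProjectionOnto V U₀'' : E n) ∈ V := Submodule.coe_mem _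
    exact Submodule.sub_mem _ (Submodule.sub_mem _ h1 hproj) (hZt _)
  have hU₀V : ∀ u ∈ V, ⟪U₀, u⟫ = 0 := by
    intro u hu
    have : U₀ ∈ Vᗮ := Submodule.sub_starProjection_mem_orthogonal U₀''
    have := (Submodule.mem_orthogonal _ _).1 this u hu
    rw [real_inner_comm] at this
    exact this
  have hchar : ∀ h ∈ 𝔥, h.2.1 - h.1 • U₀ ∈ V := by
    intro h hh
    show inE n (h.2.1 - h.1 • U₀) ∈ 𝔥
    have : inE n (h.2.1 - h.1 • U₀) = h - h.1 • X₁ - ((0:ℝ), (0:E n), h.2.2) := by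
      refine Prod.ext ?_ (Prod.ext ?_ ?_)
      · show (0:ℝ) = h.1 - h.1 * 1 - 0; ring
      · show h.2.1 - h.1 • U₀ = h.2.1 - h.1 • U₀ - 0; rw [sub_zero]
      · show (0:ℝ) = h.2.2 - h.1 * 0 - h.2.2; ring
    rw [this]
    exact Submodule.sub_mem _ (Submodule.sub_mem _ hh (Submodule.smul_mem _ _ hX₁m)) (hZt _)
  have hcharb : ∀ h : S n, h.2.1 - h.1 • U₀ ∈ V → h ∈ 𝔥 := by
    intro h hh
    have : h = h.1 • X₁ + inE n (h.2.1 - h.1 • U₀) + ((0:ℝ), (0:E n), h.2.2 - h.1 * 0) := by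
      refine Prod.ext ?_ (Prod.ext ?_ ?_)
      · show h.1 = h.1 * 1 + 0 + 0; ring
      · show h.2.1 = h.1 • U₀ + (h.2.1 - h.1 • U₀) + 0; simp
      · show h.2.2 = h.1 * 0 + 0 + (h.2.2 - h.1 * 0); ring
    rw [this]
    exact Submodule.add_mem _ (Submodule.add_mem _ (Submodule.smul_mem _ _ hX₁m) hh) (hZt _)
  set 𝔠 : Submodule ℝ (E n) := V ⊓ Submodule.comap (JE n) V with h𝔠
  set 𝔯 : Submodule ℝ (E n) := V ⊓ 𝔠ᗮ with h𝔯
  have h𝔠V : 𝔠 ≤ V := inf_le_left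
  have h𝔠J : ∀ c ∈ 𝔠, Complex.I • c ∈ 𝔠 := fun c hc => cpx_isComplex V c hc
  -- maxCS facts
  have hpure : ∀ m ∈ maxCS n (𝔥 : Set (S n)), m.1 = 0 → m.2.2 = 0 → m.2.1 ∈ 𝔠 := by
    rintro m ⟨hm, hjm⟩ h1 h2
    constructor
    · have := hchar m hm
      rw [h1, zero_smul, sub_zero] at this
      exact this
    · show Complex.I • m.2.1 ∈ V
      have h3 := hchar _ hjm
      have h4 : (Js n m).2.1 - (Js n m).1 • U₀ = Complex.I • m.2.1 := by
        rw [Js_apply]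
        show Complex.I • m.2.1 - (-m.2.2) • U₀ = _
        rw [h2]; simp
      rw [h4] at h3
      exact h3
  have hTR : TotallyRealE n 𝔯 := by
    by_cases hM : ∀ m ∈ maxCS n (𝔥 : Set (S n)), m.1 = 0
    · -- maximal complex subspace is inside E
      intro u hu v hv
      have horth : ∀ x ∈ 𝔯, ∀ m ∈ maxCS n (𝔥 : Set (S n)), sInner n (inE n x) m = 0 := by
        intro x hx m hm
        have h1 : m.1 = 0 := hM m hm
        have hjmM : Js n m ∈ maxCS n (𝔥 : Set (S n)) := by
          refine ⟨hm.2, ?_⟩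
          show Js n (Js n m) ∈ (𝔥 : Set (S n))
          rw [JsJs]
          exact Submodule.neg_mem _ hm.1
        have h2 : m.2.2 = 0 := by
          have h3 : (Js n m).1 = 0 := hM _ hjmM
          have h4 : -m.2.2 = 0 := h3
          linarith
        have hc := hpure m hm h1 h2
        show (0:ℝ) * m.1 + ⟪x, m.2.1⟫ + (0:ℝ) * m.2.2 = 0
        have h5 := (Submodule.mem_orthogonal _ _).1 hx.2 _ hc
        rw [real_inner_comm] at h5
        rw [h5]; ring
      have h0 := hCR (inE n u) hu.1 (inE n v) hv.1 (horth u hu) (horth v hv)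
      have h1 : sInner n (Js n (inE n u)) (inE n v) = ⟪Complex.I • u, v⟫ := by
        show -(0:ℝ) * (0:ℝ) + ⟪Complex.I • u, v⟫ + (0:ℝ) * (0:ℝ) = _
        ring
      rw [h1] at h0
      exact h0
    · push_neg at hM
      obtain ⟨m₀, hm₀M, hm₀1⟩ := hM
      have hsmulM : ∀ (c : ℝ), ∀ x ∈ maxCS n (𝔥 : Set (S n)),
          c • x ∈ maxCS n (𝔥 : Set (S n)) := by
        rintro c x ⟨hx, hjx⟩
        refine ⟨Submodule.smul_mem _ _ hx, ?_⟩
        show Js n (c • x) ∈ (𝔥 : Set (S n))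
        rw [map_smul]
        exact Submodule.smul_mem _ _ hjx
      have hsubM : ∀ x ∈ maxCS n (𝔥 : Set (S n)), ∀ y ∈ maxCS n (𝔥 : Set (S n)),
          x - y ∈ maxCS n (𝔥 : Set (S n)) := by
        rintro x ⟨hx, hjx⟩ y ⟨hy, hjy⟩
        refine ⟨Submodule.sub_mem _ hx hy, ?_⟩
        show Js n (x - y) ∈ (𝔥 : Set (S n))
        rw [map_sub]
        exact Submodule.sub_mem _ hjx hjy
      have hm'M : (m₀.1)⁻¹ • m₀ ∈ maxCS n (𝔥 : Set (S n)) := hsmulM _ _ hm₀M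
      have hm'1 : ((m₀.1)⁻¹ • m₀).1 = 1 := by
        show (m₀.1)⁻¹ * m₀.1 = 1
        rw [inv_mul_cancel₀ hm₀1]
      set p₀ : E n := ((m₀.1)⁻¹ • m₀).2.1 - U₀ with hp₀def
      have hp₀V : p₀ ∈ V := by
        have h1 := hchar _ hm'M.1
        rw [hm'1, one_smul] at h1
        exact h1
      set s : ℝ := ((m₀.1)⁻¹ • m₀).2.2 with hsdef
      set c₀ : E n := (Submodule.orthogonalProjectionOnto 𝔠 p₀ : E n) with hc₀def
      have hc₀𝔠 : c₀ ∈ 𝔠 := Submodule.coe_mem _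
      set p₁ : E n := p₀ - c₀ with hp₁def
      have hp₁V : p₁ ∈ V := Submodule.sub_mem _ hp₀V (h𝔠V hc₀𝔠)
      have hp₁o : p₁ ∈ 𝔠ᗮ := Submodule.sub_starProjection_mem_orthogonal p₀
      have hp₁𝔯 : p₁ ∈ 𝔯 := ⟨hp₁V, hp₁o⟩
      set m₁ : E n := U₀ + p₁ with hm₁def
      have hw₁M : (((1:ℝ), m₁, s) : S n) ∈ maxCS n (𝔥 : Set (S n)) := by
        have hiE : inE n c₀ ∈ maxCS n (𝔥 : Set (S n)) := by
          refine ⟨h𝔠V hc₀𝔠, ?_⟩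
          show Js n (inE n c₀) ∈ (𝔥 : Set (S n))
          have heq : Js n (inE n c₀) = inE n (Complex.I • c₀) := by
            rw [Js_apply]
            exact Prod.ext (by show -(0:ℝ) = 0; ring) (Prod.ext rfl rfl)
          rw [heq]
          exact hc₀𝔠.2
        have hw₁eq : (((1:ℝ), m₁, s) : S n) = (m₀.1)⁻¹ • m₀ - inE n c₀ := by
          refine Prod.ext ?_ (Prod.ext ?_ ?_)
          · show (1:ℝ) = ((m₀.1)⁻¹ • m₀).1 - 0
            rw [hm'1]; ring
          · show m₁ = ((m₀.1)⁻¹ • m₀).2.1 - c₀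
            rw [hm₁def, hp₁def, hp₀def]; abel
          · show s = ((m₀.1)⁻¹ • m₀).2.2 - 0
            rw [hsdef]; ring
        rw [hw₁eq]
        exact hsubM _ hm'M _ hiE
      have hw₁m : (((1:ℝ), m₁, s) : S n) ∈ 𝔥 := hw₁M.1
      have hjeq : Js n (((1:ℝ), m₁, s) : S n) = ((-s, Complex.I • m₁, (1:ℝ)) : S n) := rfl
      have hjw₁m : ((-s, Complex.I • m₁, (1:ℝ)) : S n) ∈ 𝔥 := by
        rw [← hjeq]; exact hw₁M.2
      have hjw₁M : ((-s, Complex.I • m₁, (1:ℝ)) : S n) ∈ maxCS n (𝔥 : Set (S n)) := by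
        rw [← hjeq]
        refine ⟨hw₁M.2, ?_⟩
        show Js n (Js n (((1:ℝ), m₁, s) : S n)) ∈ (𝔥 : Set (S n))
        rw [JsJs]
        exact Submodule.neg_mem _ hw₁M.1
      set r : E n := Complex.I • m₁ + s • U₀ with hrdef
      have hrV : r ∈ V := by
        have h3 := hchar _ hjw₁m
        have h4 : (((-s, Complex.I • m₁, (1:ℝ)) : S n)).2.1
            - (((-s, Complex.I • m₁, (1:ℝ)) : S n)).1 • U₀ = r := by
          show Complex.I • m₁ - (-s) • U₀ = r
          rw [neg_smul, sub_neg_eq_add, hrdef]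
        rw [h4] at h3
        exact h3
      have hr𝔯 : r ∈ 𝔯 := by
        refine ⟨hrV, (Submodule.mem_orthogonal _ _).2 ?_⟩
        intro c hc
        rw [hrdef, inner_add_right, real_inner_smul_right]
        have h1 : ⟪c, U₀⟫ = 0 := by
          rw [real_inner_comm]
          exact hU₀V c (h𝔠V hc)
        have h2 : ⟪c, Complex.I • m₁⟫ = 0 := by
          have hIc : Complex.I • c ∈ 𝔠 := h𝔠J c hc
          have e1 : ⟪Complex.I • c, m₁⟫ = -⟪c, Complex.I • m₁⟫ := rinner_I_skew c m₁
          have e2 : ⟪Complex.I • c, m₁⟫ = 0 := by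
            rw [hm₁def, inner_add_right]
            have e3 : ⟪Complex.I • c, U₀⟫ = 0 := by
              rw [real_inner_comm]
              exact hU₀V _ (h𝔠V hIc)
            have e4 : ⟪Complex.I • c, p₁⟫ = 0 :=
              (Submodule.mem_orthogonal _ _).1 hp₁o _ hIc
            rw [e3, e4]; ring
          linarith [e1, e2]
        rw [h1, h2]; ring
      -- membership and orthogonality of the projected vectors
      have hust_mem : ∀ x ∈ 𝔯, ust n m₁ s x ∈ 𝔥 := by
        intro x hx
        rw [ust_eq]
        exact Submodule.sub_mem _ (Submodule.sub_mem _ hx.1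
          (Submodule.smul_mem _ _ hw₁m)) (Submodule.smul_mem _ _ hjw₁m)
      have hust_orth : ∀ x ∈ 𝔯, ∀ m ∈ maxCS n (𝔥 : Set (S n)),
          sInner n (ust n m₁ s x) m = 0 := by
        intro x hx m hm
        have hs1 : (1 + s^2 : ℝ) ≠ 0 := by positivity
        set α : ℝ := (m.1 + s * m.2.2)/(1 + s^2) with hα
        set t : ℝ := (m.2.2 - s * m.1)/(1 + s^2) with ht
        set m'' : S n := m - α • (((1:ℝ), m₁, s) : S n)
          - t • ((-s, Complex.I • m₁, (1:ℝ)) : S n) with hm''def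
        have hm''M : m'' ∈ maxCS n (𝔥 : Set (S n)) :=
          hsubM _ (hsubM _ hm _ (hsmulM α _ hw₁M)) _ (hsmulM t _ hjw₁M)
        have hm''1 : m''.1 = 0 := by
          show m.1 - α * 1 - t * (-s) = 0
          rw [hα, ht]
          field_simp
          ring
        have hm''3 : m''.2.2 = 0 := by
          show m.2.2 - α * s - t * 1 = 0
          rw [hα, ht]
          field_simp
          ring
        have hc'' : m''.2.1 ∈ 𝔠 := hpure m'' hm''M hm''1 hm''3
        have hdec : m = α • (((1:ℝ), m₁, s) : S n)
            + t • ((-s, Complex.I • m₁, (1:ℝ)) : S n) + m'' := by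
          rw [hm''def]; abel
        rw [hdec, sInner_add_right, sInner_add_right, sInner_smul_right, sInner_smul_right,
          sInner_ust_w₁, sInner_ust_jw₁]
        have hpure0 : sInner n (ust n m₁ s x) m'' = 0 := by
          refine sInner_ust_pure m₁ s x m'' hm''1 hm''3 ?_ ?_ ?_
          · rw [real_inner_comm m''.2.1 x]
            exact (Submodule.mem_orthogonal _ _).1 hx.2 _ hc''
          · rw [hm₁def, inner_add_left]
            have e1 : ⟪U₀, m''.2.1⟫ = 0 := hU₀V _ (h𝔠V hc'')
            have e2 : ⟪p₁, m''.2.1⟫ = 0 := by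
              rw [real_inner_comm m''.2.1 p₁]
              exact (Submodule.mem_orthogonal _ _).1 hp₁o _ hc''
            rw [e1, e2]; ring
          · rw [rinner_I_skew m₁ m''.2.1]
            have hIc : Complex.I • m''.2.1 ∈ 𝔠 := h𝔠J _ hc''
            rw [hm₁def, inner_add_left]
            have e1 : ⟪U₀, Complex.I • m''.2.1⟫ = 0 := hU₀V _ (h𝔠V hIc)
            have e2 : ⟪p₁, Complex.I • m''.2.1⟫ = 0 := by
              rw [real_inner_comm (Complex.I • m''.2.1) p₁]
              exact (Submodule.mem_orthogonal _ _).1 hp₁o _ hIc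
            rw [e1, e2]; ring
        rw [hpure0]
        ring
      -- the star identity
      have hstar : ∀ x ∈ 𝔯, ∀ y ∈ 𝔯,
          (1 + ‖m₁‖^2 + s^2) * ⟪Complex.I • x, y⟫
            = ⟪x, m₁⟫ * ⟪y, Complex.I • m₁⟫ - ⟪y, m₁⟫ * ⟪x, Complex.I • m₁⟫ := by
        intro x hx y hy
        exact star_main m₁ s x y
          (hCR _ (hust_mem x hx) _ (hust_mem y hy) (hust_orth x hx) (hust_orth y hy))
      -- derived structural facts
      have hU₀p₁ : ⟪U₀, p₁⟫ = 0 := hU₀V p₁ hp₁V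
      have hp₁U₀ : ⟪p₁, U₀⟫ = 0 := by rw [real_inner_comm U₀ p₁]; exact hU₀p₁
      have hNsum : ‖m₁‖^2 = ‖U₀‖^2 + ‖p₁‖^2 := by
        rw [hm₁def, norm_add_sq_real, hU₀p₁]; ring
      have hIm₁split : Complex.I • m₁ = Complex.I • U₀ + Complex.I • p₁ := by
        rw [hm₁def, smul_add]
      have hκ : ⟪p₁, Complex.I • U₀⟫ = s * ‖U₀‖^2 := by
        have e0 : ⟪U₀, r⟫ = 0 := hU₀V r hrV
        rw [hrdef, inner_add_right, real_inner_smul_right, hIm₁split, inner_add_right] at e0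
        have e1 : ⟪U₀, Complex.I • U₀⟫ = 0 := rinner_self_I U₀
        have e2 : ⟪U₀, Complex.I • p₁⟫ = -⟪p₁, Complex.I • U₀⟫ := by
          rw [real_inner_comm (Complex.I • p₁) U₀, rinner_I_skew p₁ U₀]
        rw [e1, e2, real_inner_self_eq_norm_sq] at e0
        linarith
      have c1 : ⟪p₁, m₁⟫ = ‖p₁‖^2 := by
        rw [hm₁def, inner_add_right, hp₁U₀, real_inner_self_eq_norm_sq]; ring
      have c2 : ⟪p₁, Complex.I • m₁⟫ = s * ‖U₀‖^2 := by
        rw [hIm₁split, inner_add_right, hκ, rinner_self_I]; ring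
      have c3 : ⟪r, m₁⟫ = s * ‖U₀‖^2 := by
        rw [hrdef, inner_add_left, real_inner_smul_left, rinner_I_self, hm₁def,
          inner_add_right, real_inner_self_eq_norm_sq, hU₀p₁]
        ring
      have c4 : ⟪r, Complex.I • m₁⟫ = ‖U₀‖^2 + ‖p₁‖^2 - s^2 * ‖U₀‖^2 := by
        rw [hrdef, inner_add_left, real_inner_smul_left, rinner_I_I, real_inner_self_eq_norm_sq,
          hIm₁split, inner_add_right]
        have e1 : ⟪U₀, Complex.I • U₀⟫ = 0 := rinner_self_I U₀
        have e2 : ⟪U₀, Complex.I • p₁⟫ = -⟪p₁, Complex.I • U₀⟫ := by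
          rw [real_inner_comm (Complex.I • p₁) U₀, rinner_I_skew p₁ U₀]
        rw [e1, e2, hκ, hNsum]
        ring
      have c5 : ⟪Complex.I • p₁, r⟫ = ‖p₁‖^2 - s^2 * ‖U₀‖^2 := by
        rw [hrdef, inner_add_right, real_inner_smul_right, rinner_I_I, c1,
          rinner_I_skew p₁ U₀, hκ]
        ring
      have hPR := hstar p₁ hp₁𝔯 r hr𝔯
      rw [c1, c2, c3, c4, c5, hNsum] at hPR
      have hP2 : ‖p₁‖^2 = s^2 * ‖U₀‖^2 := by
        have key : (‖p₁‖^2 - s^2 * ‖U₀‖^2) * (1 + s^2) = 0 := by linear_combination hPR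
        have h1s : (1 + s^2 : ℝ) ≠ 0 := by positivity
        have := mul_eq_zero.1 key
        rcases this with h | h
        · linarith
        · exact absurd h h1s
      have hp₁r : ⟪p₁, r⟫ = s * ‖U₀‖^2 := by
        rw [hrdef, inner_add_right, real_inner_smul_right, hp₁U₀, hIm₁split]
        rw [show ⟪p₁, Complex.I • U₀ + Complex.I • p₁⟫
            = ⟪p₁, Complex.I • U₀⟫ + ⟪p₁, Complex.I • p₁⟫ from inner_add_right _ _ _]
        rw [hκ, rinner_self_I]
        ring
      have hrnorm : ‖r‖^2 = ‖U₀‖^2 := by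
        rw [← real_inner_self_eq_norm_sq]
        rw [show (⟪r, r⟫ : ℝ) = ⟪r, Complex.I • m₁ + s • U₀⟫ from by rw [← hrdef]]
        rw [inner_add_right, real_inner_smul_right, c4]
        have : ⟪r, U₀⟫ = 0 := by
          rw [real_inner_comm U₀ r]
          exact hU₀V r hrV
        rw [this, hP2]
        ring
      have hpr : p₁ = s • r := by
        have hz : ‖p₁ - s • r‖^2 = 0 := by
          rw [norm_sub_sq_real, real_inner_smul_right, hp₁r, norm_smul]
          rw [mul_pow, Real.norm_eq_abs, sq_abs, hrnorm, hP2]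
          ring
        have h1 : ‖p₁ - s • r‖ = 0 := by
          have := sq_eq_zero_iff.1 hz
          exact this
        have h2 : p₁ - s • r = 0 := norm_eq_zero.1 h1
        exact sub_eq_zero.1 h2
      intro u hu v hv
      have hfin := hstar u hu v hv
      have hxm : ∀ x ∈ 𝔯, ⟪x, m₁⟫ = s * ⟪x, r⟫ := by
        intro x hx
        have e1 : ⟪x, U₀⟫ = 0 := by
          rw [real_inner_comm U₀ x]
          exact hU₀V x hx.1
        rw [hm₁def, inner_add_right, e1, hpr, real_inner_smul_right]
        ring
      have hxI : ∀ x ∈ 𝔯, ⟪x, Complex.I • m₁⟫ = ⟪x, r⟫ := by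
        intro x hx
        have e1 : ⟪x, U₀⟫ = 0 := by
          rw [real_inner_comm U₀ x]
          exact hU₀V x hx.1
        have e2 : Complex.I • m₁ = r - s • U₀ := by
          rw [hrdef]; abel
        rw [e2, inner_sub_right, real_inner_smul_right, e1]
        ring
      rw [hxm u hu, hxm v hv, hxI u hu, hxI v hv] at hfin
      have hG : (1 + ‖m₁‖^2 + s^2 : ℝ) ≠ 0 := by positivity
      have : (1 + ‖m₁‖^2 + s^2) * ⟪Complex.I • u, v⟫ = 0 := by
        rw [hfin]; ring
      exact (mul_eq_zero.1 this).resolve_left hG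
  -- conjugation
  set X : S n := ((0:ℝ), (2:ℝ) • U₀, (0:ℝ)) with hXdef
  have hphi : ∀ y : S n, expAd n X y
      = (y.1, y.2.1 - y.1 • U₀, y.2.2 + 2 * ⟪Complex.I • U₀, y.2.1⟫) := by
    intro y
    rw [expAd_apply X rfl, bra_of_fst_zero X y rfl]
    refine Prod.ext ?_ (Prod.ext ?_ ?_)
    · show y.1 + 0 = y.1; ring
    · show y.2.1 + (-((2:ℝ)⁻¹ * y.1)) • ((2:ℝ) • U₀) = y.2.1 - y.1 • U₀
      rw [smul_smul, sub_eq_add_neg, ← neg_smul]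
      congr 2
      ring
    · show y.2.2 + (⟪Complex.I • ((2:ℝ) • U₀), y.2.1⟫ - y.1 * (0:ℝ)) = _
      rw [smul_comm, real_inner_smul_left]
      ring
  refine ⟨X, Submodule.span ℝ {B n}, Submodule.span ℝ {Z n}, 𝔠, 𝔯, le_rfl,
    cpx_isComplex V, hTR, ?_, le_rfl, fun _ => rfl, ?_⟩
  · intro u hu v hv
    have := (Submodule.mem_orthogonal _ _).1 hu.2 _ hv
    rw [real_inner_comm] at this; exact this
  · ext x
    constructor
    · rintro ⟨h, hh, rfl⟩
      rw [mem_sup4]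
      have hu' : h.2.1 - h.1 • U₀ ∈ V := hchar h hh
      obtain ⟨c, hc, r, hr, hcr⟩ := Submodule.mem_sup.1 (csup 𝔠 V h𝔠V hu')
      refine ⟨h.1 • B n, Submodule.smul_mem _ _ (Submodule.mem_span_singleton_self _),
        inE n c, ⟨c, hc, rfl⟩, inE n r, ⟨r, hr, rfl⟩,
        (h.2.2 + 2 * ⟪Complex.I • U₀, h.2.1⟫) • Z n,
        Submodule.smul_mem _ _ (Submodule.mem_span_singleton_self _), ?_⟩
      show expAd n X h = _
      rw [hphi h]
      refine Prod.ext ?_ (Prod.ext ?_ ?_)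
      · show h.1 = h.1 * 1 + 0 + 0 + (h.2.2 + 2 * ⟪Complex.I • U₀, h.2.1⟫) * 0; ring
      · show h.2.1 - h.1 • U₀
            = h.1 • (0:E n) + c + r + (h.2.2 + 2 * ⟪Complex.I • U₀, h.2.1⟫) • (0:E n)
        rw [← hcr]; simp
      · show h.2.2 + 2 * ⟪Complex.I • U₀, h.2.1⟫
            = h.1 * 0 + 0 + 0 + (h.2.2 + 2 * ⟪Complex.I • U₀, h.2.1⟫) * 1; ring
    · intro hx
      rw [mem_sup4] at hx
      obtain ⟨a, ha, b, hb, c, hc, d, hd, rfl⟩ := hx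
      have hmap : ∀ w : S n, w ∈ 𝔥 → expAd n X w ∈ Submodule.map (expAd n X).toLinearMap 𝔥 :=
        fun w hw => ⟨w, hw, rfl⟩
      refine Submodule.add_mem _ (Submodule.add_mem _ (Submodule.add_mem _ ?_ ?_) ?_) ?_
      · obtain ⟨α, rfl⟩ := Submodule.mem_span_singleton.1 ha
        refine ⟨α • X₁, Submodule.smul_mem _ _ hX₁m, ?_⟩
        show expAd n X (α • X₁) = α • B n
        rw [hphi]
        refine Prod.ext ?_ (Prod.ext ?_ ?_)
        · show α * 1 = α * 1; rfl
        · show α • U₀ - (α * 1) • U₀ = α • (0:E n); simp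
        · show α * 0 + 2 * ⟪Complex.I • U₀, α • U₀⟫ = α * 0
          rw [real_inner_smul_right, rinner_I_self]; ring
      · obtain ⟨cb, hcb, rfl⟩ := hb
        refine ⟨((0:ℝ), cb, -2 * ⟪Complex.I • U₀, cb⟫), hmemE cb (h𝔠V hcb) _, ?_⟩
        show expAd n X ((0:ℝ), cb, -2 * ⟪Complex.I • U₀, cb⟫) = inE n cb
        rw [hphi]
        refine Prod.ext rfl (Prod.ext ?_ ?_)
        · show cb - (0:ℝ) • U₀ = cb; simp
        · show -2 * ⟪Complex.I • U₀, cb⟫ + 2 * ⟪Complex.I • U₀, cb⟫ = (0:ℝ); ring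
      · obtain ⟨cr, hcr, rfl⟩ := hc
        refine ⟨((0:ℝ), cr, -2 * ⟪Complex.I • U₀, cr⟫), hmemE cr hcr.1 _, ?_⟩
        show expAd n X ((0:ℝ), cr, -2 * ⟪Complex.I • U₀, cr⟫) = inE n cr
        rw [hphi]
        refine Prod.ext rfl (Prod.ext ?_ ?_)
        · show cr - (0:ℝ) • U₀ = cr; simp
        · show -2 * ⟪Complex.I • U₀, cr⟫ + 2 * ⟪Complex.I • U₀, cr⟫ = (0:ℝ); ring
      · obtain ⟨t, rfl⟩ := Submodule.mem_span_singleton.1 hd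
        refine ⟨t • Z n, Submodule.smul_mem _ _ hZ, ?_⟩
        show expAd n X (t • Z n) = t • Z n
        rw [hphi]
        refine Prod.ext ?_ (Prod.ext ?_ ?_)
        · show t * 0 = t * 0; rfl
        · show t • (0:E n) - (t * 0) • U₀ = t • (0:E n); simp
        · show t * 1 + 2 * ⟪Complex.I • U₀, t • (0:E n)⟫ = t * 1
          rw [smul_zero, inner_zero_right]; ring

end CaseB1

/-- a Lie subalgebra of `𝔰` which is a CR subspace of `𝔰` is conjugate, via some
`exp(ad(X))`, to an orthogonal direct sum `𝔟 ⊕ 𝔠 ⊕ 𝔯 ⊕ 𝔷` with `𝔟 ⊆ ℝB`, `𝔠` complex in `E`,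
`𝔯` totally real in `E` orthogonal to `𝔠`, and `𝔷 ⊆ ℝZ` with `𝔷 = ℝZ` whenever `𝔠 ≠ 0`. -/
theorem statement4 (n : ℕ) (hn : 2 ≤ n) (𝔥 : Submodule ℝ (S n))
    (halg : ∀ X ∈ 𝔥, ∀ Y ∈ 𝔥, bra n X Y ∈ 𝔥)
    (hCR : IsCRS n (𝔥 : Set (S n))) :
    ∃ X : S n, ∃ 𝔟 𝔷 : Submodule ℝ (S n), ∃ 𝔠 𝔯 : Submodule ℝ (E n),
      𝔟 ≤ Submodule.span ℝ {B n} ∧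
      IsComplexE n 𝔠 ∧
      TotallyRealE n 𝔯 ∧
      (∀ u ∈ 𝔯, ∀ v ∈ 𝔠, ⟪u, v⟫ = 0) ∧
      𝔷 ≤ Submodule.span ℝ {Z n} ∧
      (𝔠 ≠ ⊥ → 𝔷 = Submodule.span ℝ {Z n}) ∧
      Submodule.map (expAd n X).toLinearMap 𝔥 =
        𝔟 ⊔ Submodule.map (inE n) 𝔠 ⊔ Submodule.map (inE n) 𝔯 ⊔ 𝔷 := by
  by_cases hB : ∀ h ∈ 𝔥, (h : S n).1 = 0
  · by_cases hZ : Z n ∈ 𝔥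
    · exact caseA1 𝔥 hCR hB hZ
    · exact caseA2 𝔥 halg hB hZ
  · push_neg at hB
    obtain ⟨h₀, h₀m, h₀1⟩ := hB
    by_cases hZ : Z n ∈ 𝔥
    · exact caseB1 𝔥 hCR h₀ h₀m h₀1 hZ
    · exact caseB0 𝔥 halg h₀ h₀m h₀1 hZ

end CHn
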